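/- Let φ be an HML formula (in negation normal form) such that there exist processes p1, p2 with p1 ⊨ φ, p2 ⊨ φ, and p1 not ≲_S p2. Then there exist processes q1, q2 such that q1 ⊨ φ, q2 ⊨ φ, q1 not ≲_S q2, and depth(q_i) ≤ md(φ) + 1 for both i = 1, 2. -/
import Mathlib


/-- Finite, loop-free CCS processes over the action set `Act`:
`p ::= 0 | a.p | p + p`. -/
inductive Proc (Act : Type) : Type
  | nil : Proc Act
  | pre : Act → Proc Act → Proc Act
  | plus : Proc Act → Proc Act → Proc Act

/-- The transition relation: `a.p —a→ p`, and `p₁ + p₂ —a→ p'` iff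
`p₁ —a→ p'` or `p₂ —a→ p'`. -/
inductive Step {Act : Type} : Proc Act → Act → Proc Act → Prop
  | pre (a : Act) (p : Proc Act) : Step (Proc.pre a p) a p
  | plusL : ∀ {p₁ p₂ p' : Proc Act} {a : Act},
      Step p₁ a p' → Step (Proc.plus p₁ p₂) a p'
  | plusR : ∀ {p₁ p₂ p' : Proc Act} {a : Act},
      Step p₂ a p' → Step (Proc.plus p₁ p₂) a p'

/-- HML formulas in negation normal form:
`φ ::= tt | ff | φ∧φ | φ∨φ | ⟨a⟩φ | [a]φ`. -/
inductive HML (Act : Type) : Type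
  | tt : HML Act
  | ff : HML Act
  | conj : HML Act → HML Act → HML Act
  | disj : HML Act → HML Act → HML Act
  | dia : Act → HML Act → HML Act
  | box : Act → HML Act → HML Act

/-- The satisfaction relation `p ⊨ φ`. -/
def Sat {Act : Type} : Proc Act → HML Act → Prop
  | _, HML.tt => True
  | _, HML.ff => False
  | p, HML.conj φ ψ => Sat p φ ∧ Sat p ψ
  | p, HML.disj φ ψ => Sat p φ ∨ Sat p ψ
  | p, HML.dia a φ => ∃ p', Step p a p' ∧ Sat p' φ
  | p, HML.box a φ => ∀ p', Step p a p' → Sat p' φ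

/-- `φ` entails `ψ` iff every process satisfying `φ` satisfies `ψ`. -/
def Entails {Act : Type} (φ ψ : HML Act) : Prop :=
  ∀ p : Proc Act, Sat p φ → Sat p ψ

/-- `R` is a simulation relation. -/
def IsSimulation {Act : Type} (R : Proc Act → Proc Act → Prop) : Prop :=
  ∀ p q, R p q → ∀ a p', Step p a p' → ∃ q', Step q a q' ∧ R p' q'

/-- The simulation preorder `≲_S`: the largest simulation. -/
def Sim {Act : Type} (p q : Proc Act) : Prop :=
  ∃ R, IsSimulation R ∧ R p q

/-- The set `I(p)` of initial actions of a process. -/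
def initials {Act : Type} (p : Proc Act) : Set Act :=
  {a | ∃ p', Step p a p'}

/-- The depth of a process: the length of a longest trace. -/
def depth {Act : Type} : Proc Act → ℕ
  | Proc.nil => 0
  | Proc.pre _ p => depth p + 1
  | Proc.plus p q => max (depth p) (depth q)

/-- The modal depth of a formula: the maximal nesting of modal operators. -/
def md {Act : Type} : HML Act → ℕ
  | HML.tt => 0
  | HML.ff => 0
  | HML.conj φ ψ => max (md φ) (md ψ)
  | HML.disj φ ψ => max (md φ) (md ψ)
  | HML.dia _ φ => md φ + 1
  | HML.box _ φ => md φ + 1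

section Aux
variable {Act : Type}

/-- Truncate a process at depth `n`. -/
def prune : ℕ → Proc Act → Proc Act
  | 0, _ => Proc.nil
  | _+1, Proc.nil => Proc.nil
  | n+1, Proc.pre a p => Proc.pre a (prune n p)
  | n+1, Proc.plus p q => Proc.plus (prune (n+1) p) (prune (n+1) q)

/-- Like `p` up to depth `n`, then a fresh `a₀` step at depth `n`. -/
def satur (a₀ : Act) : ℕ → Proc Act → Proc Act
  | 0, _ => Proc.pre a₀ Proc.nil
  | _+1, Proc.nil => Proc.nil
  | n+1, Proc.pre a p => Proc.pre a (satur a₀ n p)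
  | n+1, Proc.plus p q => Proc.plus (satur a₀ (n+1) p) (satur a₀ (n+1) q)

theorem depth_prune_le (n : ℕ) (p : Proc Act) : depth (prune n p) ≤ n := by
  induction p generalizing n with
  | nil => cases n <;> simp [prune, depth]
  | pre a p ih =>
      cases n with
      | zero => simp [prune, depth]
      | succ k => simpa [prune, depth] using ih k
  | plus p q ihp ihq =>
      cases n with
      | zero => simp [prune, depth]
      | succ k =>
          simp only [prune, depth, max_le_iff]
          exact ⟨ihp _, ihq _⟩

theorem step_prune {n : ℕ} {p x : Proc Act} {a : Act}
    (h : Step (prune (n+1) p) a x) : ∃ p', Step p a p' ∧ x = prune n p' := by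
  induction p with
  | nil => cases h
  | pre b q ih =>
      cases h
      exact ⟨q, Step.pre _ _, rfl⟩
  | plus p q ihp ihq =>
      cases h with
      | plusL h =>
          obtain ⟨p', hs, rfl⟩ := ihp h
          exact ⟨p', Step.plusL hs, rfl⟩
      | plusR h =>
          obtain ⟨p', hs, rfl⟩ := ihq h
          exact ⟨p', Step.plusR hs, rfl⟩

theorem prune_step {n : ℕ} {p p' : Proc Act} {a : Act}
    (h : Step p a p') : Step (prune (n+1) p) a (prune n p') := by
  induction h with
  | pre a p => exact Step.pre a (prune n p)
  | plusL _ ih => exact Step.plusL ih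
  | plusR _ ih => exact Step.plusR ih

/-- Satisfaction of formulas of modal depth `≤ n` only depends on the
tree up to depth `n`. -/
theorem sat_prune {n : ℕ} (φ : HML Act) (hmd : md φ ≤ n) (p : Proc Act) :
    Sat p φ ↔ Sat (prune n p) φ := by
  induction φ generalizing p n with
  | tt => simp [Sat]
  | ff => simp [Sat]
  | conj φ ψ ihφ ihψ =>
      simp only [md, max_le_iff] at hmd
      simp only [Sat]
      rw [ihφ hmd.1, ihψ hmd.2]
  | disj φ ψ ihφ ihψ =>
      simp only [md, max_le_iff] at hmd
      simp only [Sat]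
      rw [ihφ hmd.1, ihψ hmd.2]
  | dia a φ ih =>
      obtain ⟨m, rfl⟩ : ∃ m, n = m + 1 := ⟨n - 1, by simp [md] at hmd; omega⟩
      have hm : md φ ≤ m := by simp [md] at hmd; omega
      simp only [Sat]
      constructor
      · rintro ⟨p', hs, hsat⟩
        exact ⟨prune m p', prune_step hs, (ih hm p').mp hsat⟩
      · rintro ⟨x, hs, hsat⟩
        obtain ⟨p', hs', rfl⟩ := step_prune hs
        exact ⟨p', hs', (ih hm p').mpr hsat⟩
  | box a φ ih =>
      obtain ⟨m, rfl⟩ : ∃ m, n = m + 1 := ⟨n - 1, by simp [md] at hmd; omega⟩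
      have hm : md φ ≤ m := by simp [md] at hmd; omega
      simp only [Sat]
      constructor
      · intro h x hs
        obtain ⟨p', hs', rfl⟩ := step_prune hs
        exact (ih hm p').mp (h p' hs')
      · intro h p' hs
        exact (ih hm p').mpr (h (prune m p') (prune_step hs))

theorem sim_prune (n : ℕ) (p : Proc Act) : Sim (prune n p) p := by
  refine ⟨fun x y => ∃ m, x = prune m y, ?_, n, rfl⟩
  rintro x y ⟨m, rfl⟩ a x' hs
  cases m with
  | zero =>
      have hs' : Step (Proc.nil : Proc Act) a x' := by
        rw [show prune 0 y = (Proc.nil : Proc Act) by cases y <;> rfl] at hs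
        exact hs
      cases hs'
  | succ k =>
      obtain ⟨y', hs', rfl⟩ := step_prune hs
      exact ⟨y', hs', k, rfl⟩

theorem sim_step {p q p' : Proc Act} {a : Act} (h : Sim p q)
    (hs : Step p a p') : ∃ q', Step q a q' ∧ Sim p' q' := by
  obtain ⟨R, hR, hpq⟩ := h
  obtain ⟨q', hq', hRq⟩ := hR p q hpq a p' hs
  exact ⟨q', hq', R, hR, hRq⟩

theorem sim_trans {p q r : Proc Act} (h₁ : Sim p q) (h₂ : Sim q r) :
    Sim p r := by
  refine ⟨fun x z => ∃ y, Sim x y ∧ Sim y z, ?_, q, h₁, h₂⟩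
  rintro x z ⟨y, hxy, hyz⟩ a x' hs
  obtain ⟨y', hy', hxy'⟩ := sim_step hxy hs
  obtain ⟨z', hz', hyz'⟩ := sim_step hyz hy'
  exact ⟨z', hz', y', hxy', hyz'⟩

theorem depth_step {p p' : Proc Act} {a : Act} (h : Step p a p') :
    depth p' < depth p := by
  induction h with
  | pre a p => simp [depth]
  | plusL _ ih => simp only [depth]; omega
  | plusR _ ih => simp only [depth]; omega

theorem exists_step_of_depth {p : Proc Act} (h : 0 < depth p) :
    ∃ a p', Step p a p' ∧ depth p = depth p' + 1 := by
  induction p with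
  | nil => simp [depth] at h
  | pre a p _ => exact ⟨a, p, Step.pre a p, rfl⟩
  | plus p q ihp ihq =>
      simp only [depth] at h ⊢
      rcases le_total (depth q) (depth p) with hle | hle
      · obtain ⟨a, p', hs, hd⟩ := ihp (by omega)
        exact ⟨a, p', Step.plusL hs, by omega⟩
      · obtain ⟨a, q', hs, hd⟩ := ihq (by omega)
        exact ⟨a, q', Step.plusR hs, by omega⟩

theorem sim_depth_le : ∀ (N : ℕ) (p q : Proc Act), depth p ≤ N →
    Sim p q → depth p ≤ depth q := by
  intro N
  induction N with
  | zero => intro p q h _; omega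
  | succ N ih =>
      intro p q h hsim
      rcases Nat.eq_zero_or_pos (depth p) with h0 | h0
      · omega
      · obtain ⟨a, p', hs, hd⟩ := exists_step_of_depth h0
        obtain ⟨q', hq', hsim'⟩ := sim_step hsim hs
        have h1 := ih p' q' (by omega) hsim'
        have h2 := depth_step hq'
        omega

theorem prune_satur (a₀ : Act) (n : ℕ) (p : Proc Act) :
    prune n (satur a₀ n p) = prune n p := by
  induction p generalizing n with
  | nil => cases n <;> rfl
  | pre a p ih =>
      cases n with
      | zero => rfl
      | succ k => simp [satur, prune, ih]
  | plus p q ihp ihq =>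
      cases n with
      | zero => rfl
      | succ k => simp [satur, prune, ihp, ihq]

theorem depth_satur_le (a₀ : Act) (n : ℕ) (p : Proc Act) :
    depth (satur a₀ n p) ≤ n + 1 := by
  induction p generalizing n with
  | nil => cases n <;> simp [satur, depth]
  | pre a p ih =>
      cases n with
      | zero => simp [satur, depth]
      | succ k => simpa [satur, depth] using ih k
  | plus p q ihp ihq =>
      cases n with
      | zero => simp [satur, depth]
      | succ k =>
          simp only [satur, depth, max_le_iff]
          exact ⟨ihp _, ihq _⟩

theorem depth_satur (a₀ : Act) {n : ℕ} {p : Proc Act} (h : n ≤ depth p) :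
    depth (satur a₀ n p) = n + 1 := by
  induction p generalizing n with
  | nil =>
      simp only [depth] at h
      interval_cases n
      simp [satur, depth]
  | pre a p ih =>
      cases n with
      | zero => simp [satur, depth]
      | succ k =>
          simp only [depth] at h
          have hk := ih (show k ≤ depth p by omega)
          simp [satur, depth, hk]
  | plus p q ihp ihq =>
      cases n with
      | zero => simp [satur, depth]
      | succ k =>
          simp only [depth] at h
          simp only [satur, depth]
          rcases le_total (depth q) (depth p) with hle | hle
          · have h1 := ihp (show k + 1 ≤ depth p by omega)
            have h2 := depth_satur_le a₀ (k+1) q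
            omega
          · have h1 := ihq (show k + 1 ≤ depth q by omega)
            have h2 := depth_satur_le a₀ (k+1) p
            omega

end Aux

/-- If there are processes `p₁ ⊨ φ`, `p₂ ⊨ φ` with `p₁ ⋦_S p₂`, then there are
`q₁ ⊨ φ`, `q₂ ⊨ φ` with `q₁ ⋦_S q₂` and `depth(q_i) ≤ md(φ) + 1` for
`i = 1, 2`. -/
theorem small_witnesses_of_not_sim {Act : Type} [Fintype Act] [Nonempty Act]
    (φ : HML Act) (p₁ p₂ : Proc Act) (h₁ : Sat p₁ φ) (h₂ : Sat p₂ φ)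
    (hns : ¬ Sim p₁ p₂) :
    ∃ q₁ q₂ : Proc Act, Sat q₁ φ ∧ Sat q₂ φ ∧ ¬ Sim q₁ q₂ ∧
      depth q₁ ≤ md φ + 1 ∧ depth q₂ ≤ md φ + 1 := by
  classical
  set n := md φ with hn
  obtain ⟨a₀⟩ := ‹Nonempty Act›
  have hq₂sat : Sat (prune n p₂) φ := (sat_prune φ le_rfl p₂).mp h₂
  have hq₂d : depth (prune n p₂) ≤ n := depth_prune_le n p₂
  rcases le_or_gt (depth p₁) n with hd | hd
  · -- p₁ is already small
    refine ⟨p₁, prune n p₂, h₁, hq₂sat, ?_, by omega, by omega⟩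
    intro hsim
    exact hns (sim_trans hsim (sim_prune n p₂))
  · -- saturate p₁ to depth exactly n+1
    refine ⟨satur a₀ n p₁, prune n p₂, ?_, hq₂sat, ?_, ?_, by omega⟩
    · have := (sat_prune φ le_rfl (satur a₀ n p₁))
      rw [this, prune_satur, ← sat_prune φ le_rfl p₁]
      exact h₁
    · intro hsim
      have h1 : depth (satur a₀ n p₁) = n + 1 := depth_satur a₀ (by omega)
      have h2 := sim_depth_le (depth (satur a₀ n p₁)) _ _ le_rfl hsim
      omega
    · exact le_of_eq (depth_satur a₀ (by omega))
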